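/- Let 𝒜 : ℝ^d → ℂ^{n×n} be a matrix-valued function each of whose entries is real-analytic on ℝ^d, with 𝒜(ω) Hermitian for every ω, and let Λ(ω) := λ_min(𝒜(ω)). Let ω₀ ∈ ℝ^d be such that λ_min(𝒜(ω₀)) is a simple eigenvalue, and assume Λ is twice differentiable at ω₀. Let ∇²𝒜(ω₀) denote the (nd)×(nd) matrix, indexed by pairs (k,i) with k ∈ {1,…,d} and i ∈ {1,…,n}, whose entry at position ((k,i),(ℓ,j)) is ∂²𝒜_{ij}/∂ω_k∂ω_ℓ evaluated at ω₀; this matrix is Hermitian. Then the Hessian ∇²Λ(ω₀) satisfies λ_max(∇²Λ(ω₀)) ≤ λ_max(∇²𝒜(ω₀)); equivalently, D²Λ(ω₀)[p,p] ≤ λ_max(∇²𝒜(ω₀))·‖p‖² for every p ∈ ℝ^d. -/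

import Mathlib

open Filter Topology Matrix

lemma quadform_decomp {m : Type*} [Fintype m] [DecidableEq m] {B : Matrix m m ℂ}
    (hB : B.IsHermitian) (x : m → ℂ) :
    ∃ y : m → ℂ, (∑ i, Complex.normSq (y i)) = ∑ i, Complex.normSq (x i) ∧
      (star x ⬝ᵥ B *ᵥ x).re = ∑ i, hB.eigenvalues i * Complex.normSq (y i) := by
  classical
  set U : Matrix m m ℂ := (hB.eigenvectorUnitary : Matrix m m ℂ) with hU
  set y : m → ℂ := (star U) *ᵥ x with hy
  have hxy : star x ᵥ* U = star y := by
    rw [hy, Matrix.star_mulVec, Matrix.star_eq_conjTranspose, Matrix.conjTranspose_conjTranspose]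
  have hUU : U * Uᴴ = 1 := by
    simpa [Matrix.star_eq_conjTranspose] using Matrix.mem_unitaryGroup_iff.mp hB.eigenvectorUnitary.2
  refine ⟨y, ?_, ?_⟩
  · have h1 : star y ⬝ᵥ y = star x ⬝ᵥ x := by
      rw [hy, Matrix.star_mulVec, Matrix.star_eq_conjTranspose, Matrix.conjTranspose_conjTranspose, ← Matrix.dotProduct_mulVec,
        Matrix.mulVec_mulVec, hUU, Matrix.one_mulVec]
    have h2 : ∀ z : m → ℂ, star z ⬝ᵥ z = ((∑ i, Complex.normSq (z i) : ℝ) : ℂ) := by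
      intro z
      simp [dotProduct, Complex.normSq_eq_conj_mul_self]
    have := (h2 y).symm.trans (h1.trans (h2 x))
    exact_mod_cast this
  · have hspec := hB.spectral_theorem
    have : star x ⬝ᵥ B *ᵥ x
        = star y ⬝ᵥ (Matrix.diagonal (RCLike.ofReal ∘ hB.eigenvalues) *ᵥ y) := by
      conv_lhs => rw [hspec, Unitary.conjStarAlgAut_apply]
      rw [← Matrix.mulVec_mulVec, ← Matrix.mulVec_mulVec, Matrix.dotProduct_mulVec, hxy]
    rw [this]
    have : star y ⬝ᵥ (Matrix.diagonal (RCLike.ofReal ∘ hB.eigenvalues) *ᵥ y)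
        = ((∑ i, hB.eigenvalues i * Complex.normSq (y i) : ℝ) : ℂ) := by
      push_cast
      simp only [dotProduct, Matrix.mulVec_diagonal, Pi.star_apply, Function.comp]
      congr 1; funext i
      rw [Complex.normSq_eq_conj_mul_self]
      simp [RCLike.ofReal]; ring
    rw [this, Complex.ofReal_re]


lemma quadform_le_iSup {m : Type*} [Fintype m] [DecidableEq m] [Nonempty m]
    {B : Matrix m m ℂ} (hB : B.IsHermitian) (x : m → ℂ) :
    (star x ⬝ᵥ B *ᵥ x).re ≤ (⨆ i, hB.eigenvalues i) * ∑ i, Complex.normSq (x i) := by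
  obtain ⟨y, hy, hq⟩ := quadform_decomp hB x
  rw [hq, ← hy, Finset.mul_sum]
  refine Finset.sum_le_sum fun i _ => ?_
  exact mul_le_mul_of_nonneg_right
    (le_ciSup (Set.Finite.bddAbove (Set.finite_range _)) i) (Complex.normSq_nonneg _)

lemma iInf_le_quadform {m : Type*} [Fintype m] [DecidableEq m] [Nonempty m]
    {B : Matrix m m ℂ} (hB : B.IsHermitian) (x : m → ℂ) :
    (⨅ i, hB.eigenvalues i) * ∑ i, Complex.normSq (x i) ≤ (star x ⬝ᵥ B *ᵥ x).re := by
  obtain ⟨y, hy, hq⟩ := quadform_decomp hB x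
  rw [hq, ← hy, Finset.mul_sum]
  refine Finset.sum_le_sum fun i _ => ?_
  exact mul_le_mul_of_nonneg_right
    (ciInf_le (Set.Finite.bddBelow (Set.finite_range _)) i) (Complex.normSq_nonneg _)

lemma abs_quadform_le {m : Type*} [Fintype m] {B : Matrix m m ℂ} (x : m → ℂ)
    (hx : ∀ i, ‖x i‖ ≤ 1) :
    |(star x ⬝ᵥ B *ᵥ x).re| ≤ ∑ i, ∑ j, ‖B i j‖ := by
  calc |(star x ⬝ᵥ B *ᵥ x).re| ≤ ‖star x ⬝ᵥ B *ᵥ x‖ := Complex.abs_re_le_norm _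
    _ ≤ ∑ i, ∑ j, ‖B i j‖ := by
        rw [dotProduct]
        refine (norm_sum_le _ _).trans (Finset.sum_le_sum fun i _ => ?_)
        rw [Matrix.mulVec, dotProduct]
        rw [Finset.mul_sum]
        refine (norm_sum_le _ _).trans (Finset.sum_le_sum fun j _ => ?_)
        rw [norm_mul, norm_mul]
        have h1 : ‖star x i‖ ≤ 1 := by
          simpa using hx i
        calc ‖star x i‖ * (‖B i j‖ * ‖x j‖)
            ≤ 1 * (‖B i j‖ * 1) := by
              refine mul_le_mul h1 ?_ (by positivity) zero_le_one
              exact mul_le_mul_of_nonneg_left (hx j) (by positivity)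
          _ = ‖B i j‖ := by ring

lemma det_sub_smul_eq_prod {m : Type*} [Fintype m] [DecidableEq m] {B : Matrix m m ℂ}
    (hB : B.IsHermitian) (x : ℝ) :
    (B - (x : ℂ) • 1).det = ∏ i, ((hB.eigenvalues i : ℂ) - x) := by
  classical
  set U : Matrix m m ℂ := (hB.eigenvectorUnitary : Matrix m m ℂ) with hU
  have hUU : U * Uᴴ = 1 := by
    simpa [Matrix.star_eq_conjTranspose] using Matrix.mem_unitaryGroup_iff.mp hB.eigenvectorUnitary.2
  have key : B - (x : ℂ) • 1
      = U * (Matrix.diagonal (fun i => (hB.eigenvalues i : ℂ) - x)) * Uᴴ := by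
    have h1 : Matrix.diagonal (fun i => (hB.eigenvalues i : ℂ) - x)
        = Matrix.diagonal (RCLike.ofReal ∘ hB.eigenvalues) - (x : ℂ) • 1 := by
      ext i j
      by_cases h : i = j <;>
        simp [h, Matrix.diagonal_apply, Matrix.sub_apply, Matrix.smul_apply, Matrix.one_apply,
          RCLike.ofReal]
    rw [h1, Matrix.mul_sub, Matrix.sub_mul]
    congr 1
    · simpa [Matrix.star_eq_conjTranspose] using hB.spectral_theorem
    · rw [Matrix.mul_smul, Matrix.smul_mul, Matrix.mul_one, hUU]
  have hdet : U.det * Uᴴ.det = 1 := by rw [← Matrix.det_mul, hUU, Matrix.det_one]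
  rw [key, Matrix.det_mul, Matrix.det_mul, mul_right_comm, hdet, one_mul, Matrix.det_diagonal]


section helpers
variable {F : Type*} [NormedAddCommGroup F] [NormedSpace ℝ F]

lemma deriv_diffAt_of_contDiffAt {f : ℝ → F} {t : ℝ} (hf : ContDiffAt ℝ 2 f t) :
    DifferentiableAt ℝ (deriv f) t := by
  have h1 : ContDiffAt ℝ 1 (fderiv ℝ f) t := hf.fderiv_right (by norm_num)
  have h2 : DifferentiableAt ℝ (fun s => fderiv ℝ f s 1) t :=
    ((ContinuousLinearMap.apply ℝ F (1:ℝ)).differentiable.differentiableAt).comp t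
      (h1.differentiableAt one_ne_zero)
  have h3 : deriv f = fun s => fderiv ℝ f s 1 := by
    funext s; rw [fderiv_apply_one_eq_deriv]
  rw [h3]; exact h2

lemma eventually_diffAt_of_contDiffAt {f : ℝ → F} {t : ℝ} (hf : ContDiffAt ℝ 2 f t) :
    ∀ᶠ s in 𝓝 t, DifferentiableAt ℝ f s :=
  (hf.eventually (by simp)).mono fun s hs => hs.differentiableAt two_ne_zero

lemma deriv2_clm {G : Type*} [NormedAddCommGroup G] [NormedSpace ℝ G]
    (L : F →L[ℝ] G) {f : ℝ → F} (hf : ContDiffAt ℝ 2 f 0) :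
    deriv (deriv (fun t => L (f t))) 0 = L (deriv (deriv f) 0) := by
  have h1 : (fun t => deriv (fun s => L (f s)) t) =ᶠ[𝓝 (0:ℝ)] fun t => L (deriv f t) :=
    (eventually_diffAt_of_contDiffAt hf).mono fun t ht =>
      (L.hasFDerivAt.comp_hasDerivAt t ht.hasDerivAt).deriv
  rw [h1.deriv_eq]
  exact (L.hasFDerivAt.comp_hasDerivAt 0 (deriv_diffAt_of_contDiffAt hf).hasDerivAt).deriv

lemma deriv2_sum {ι : Type*} (s : Finset ι) {f : ι → ℝ → F}
    (hf : ∀ i ∈ s, ContDiffAt ℝ 2 (f i) 0) :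
    deriv (deriv (fun t => ∑ i ∈ s, f i t)) 0 = ∑ i ∈ s, deriv (deriv (f i)) 0 := by
  have hev : ∀ᶠ t in 𝓝 (0:ℝ), ∀ i ∈ s, DifferentiableAt ℝ (f i) t := by
    rw [eventually_all_finset]
    exact fun i hi => eventually_diffAt_of_contDiffAt (hf i hi)
  have h1 : (fun t => deriv (fun u => ∑ i ∈ s, f i u) t) =ᶠ[𝓝 (0:ℝ)]
      fun t => ∑ i ∈ s, deriv (f i) t :=
    hev.mono fun t ht => deriv_fun_sum ht
  rw [h1.deriv_eq]
  exact deriv_fun_sum fun i hi => deriv_diffAt_of_contDiffAt (hf i hi)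

lemma deriv2_sub {f g : ℝ → F} (hf : ContDiffAt ℝ 2 f 0) (hg : ContDiffAt ℝ 2 g 0) :
    deriv (deriv (fun t => f t - g t)) 0 = deriv (deriv f) 0 - deriv (deriv g) 0 := by
  have h1 : (fun t => deriv (fun u => f u - g u) t) =ᶠ[𝓝 (0:ℝ)]
      fun t => deriv f t - deriv g t :=
    ((eventually_diffAt_of_contDiffAt hf).and (eventually_diffAt_of_contDiffAt hg)).mono
      fun t ht => deriv_sub ht.1 ht.2
  rw [h1.deriv_eq]
  exact deriv_sub (deriv_diffAt_of_contDiffAt hf) (deriv_diffAt_of_contDiffAt hg)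

variable {E : Type*} [NormedAddCommGroup E] [NormedSpace ℝ E]

lemma hasDerivAt_line (x p : E) (t : ℝ) : HasDerivAt (fun s : ℝ => x + s • p) p t := by
  simpa using ((hasDerivAt_id t).smul_const p).const_add x

lemma second_deriv_line {f : E → F} {x : E} (p : E) (hf : ContDiffAt ℝ 2 f x) :
    deriv (deriv (fun t : ℝ => f (x + t • p))) 0 = fderiv ℝ (fderiv ℝ f) x p p := by
  have hu0 : x + (0:ℝ) • p = x := by simp
  have hucont : Continuous (fun t : ℝ => x + t • p) := by
    continuity
  have hev : ∀ᶠ t in 𝓝 (0:ℝ), DifferentiableAt ℝ f (x + t • p) := by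
    have h := hf.eventually (by simp)
    have := hucont.tendsto (0:ℝ)
    rw [hu0] at this
    exact (this.eventually h).mono fun t ht => ht.differentiableAt two_ne_zero
  have h1 : (fun t => deriv (fun s : ℝ => f (x + s • p)) t) =ᶠ[𝓝 (0:ℝ)]
      fun t => fderiv ℝ f (x + t • p) p :=
    hev.mono fun t ht => (ht.hasFDerivAt.comp_hasDerivAt t (hasDerivAt_line x p t)).deriv
  rw [h1.deriv_eq]
  have hfd : DifferentiableAt ℝ (fderiv ℝ f) x := (hf.fderiv_right (m := 1) (by norm_num)).differentiableAt one_ne_zero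
  have h2 : HasDerivAt (fun t : ℝ => fderiv ℝ f (x + t • p) p)
      (fderiv ℝ (fderiv ℝ f) x p p) 0 := by
    have h3 : HasDerivAt (fun t : ℝ => fderiv ℝ f (x + t • p))
        (fderiv ℝ (fderiv ℝ f) x p) 0 := by
      have hfd' : HasFDerivAt (fderiv ℝ f) (fderiv ℝ (fderiv ℝ f) x) (x + (0:ℝ) • p) := by
        rw [hu0]; exact hfd.hasFDerivAt
      exact hfd'.comp_hasDerivAt 0 (hasDerivAt_line x p 0)
    exact (ContinuousLinearMap.apply ℝ F p).hasFDerivAt.comp_hasDerivAt 0 h3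
  exact h2.deriv

lemma second_deriv_test {h : ℝ → ℝ} (hh : ContDiffAt ℝ 2 h 0)
    (hmax : ∀ t, h t ≤ h 0) : deriv (deriv h) 0 ≤ 0 := by
  by_contra hc
  push_neg at hc
  have h'0 : deriv h 0 = 0 := by
    have : IsLocalMax h 0 := Filter.Eventually.of_forall hmax
    exact this.deriv_eq_zero
  have hd : HasDerivAt (deriv h) (deriv (deriv h) 0) 0 :=
    (deriv_diffAt_of_contDiffAt hh).hasDerivAt
  have hslope := hasDerivAt_iff_tendsto_slope.mp hd
  have hpos : ∀ᶠ t in 𝓝[>] (0:ℝ), 0 < deriv h t := by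
    have h1 : ∀ᶠ t in 𝓝[≠] (0:ℝ), 0 < slope (deriv h) 0 t :=
      hslope.eventually (eventually_gt_nhds hc)
    have h2 : ∀ᶠ t in 𝓝[>] (0:ℝ), 0 < slope (deriv h) 0 t :=
      h1.filter_mono (nhdsWithin_mono 0 fun t ht => ne_of_gt ht)
    refine (h2.and eventually_mem_nhdsWithin).mono fun t ht' => ?_
    obtain ⟨ht1, ht2⟩ := ht'
    have ht2' : (0:ℝ) < t := ht2
    have : slope (deriv h) 0 t = deriv h t / t := by
      rw [slope_def_field, h'0]; simp
    rw [this] at ht1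
    have := mul_pos ht1 ht2'
    rwa [div_mul_cancel₀ _ (ne_of_gt ht2')] at this
  obtain ⟨u, hu, huIoo⟩ := mem_nhdsGT_iff_exists_Ioo_subset.mp hpos
  obtain ⟨ε, hε, hdiff⟩ := Metric.eventually_nhds_iff.mp (eventually_diffAt_of_contDiffAt hh)
  set b := min (u/2) (ε/2) with hb
  have hb0 : 0 < b := by
    have : (0:ℝ) < u := hu
    positivity
  have hcont : ContinuousOn h (Set.Icc 0 b) := by
    intro t ht
    refine (hdiff ?_).continuousAt.continuousWithinAt
    have h1 : |t| ≤ b := by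
      rw [abs_of_nonneg ht.1]; exact ht.2
    calc dist t 0 = |t| := by simp [Real.dist_eq]
      _ ≤ b := h1
      _ < ε := by
        calc b ≤ ε/2 := min_le_right _ _
          _ < ε := by linarith
  have hmono : StrictMonoOn h (Set.Icc 0 b) := by
    refine strictMonoOn_of_deriv_pos (convex_Icc 0 b) hcont fun t ht => ?_
    rw [interior_Icc] at ht
    refine huIoo ⟨ht.1, ?_⟩
    calc t < b := ht.2
      _ ≤ u/2 := min_le_left _ _
      _ < u := by
        have : (0:ℝ) < u := hu
        linarith
  have := hmono (Set.left_mem_Icc.mpr hb0.le) (Set.right_mem_Icc.mpr hb0.le) hb0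
  exact absurd (hmax b) (not_le.mpr this)

end helpers


lemma contDiffAt_finset_prod {E : Type*} [NormedAddCommGroup E] [NormedSpace ℝ E]
    {ι : Type*} (s : Finset ι) {f : ι → E → ℂ} {x : E}
    (hf : ∀ i ∈ s, ContDiffAt ℝ 2 (f i) x) :
    ContDiffAt ℝ 2 (fun y => ∏ i ∈ s, f i y) x := by
  classical
  induction s using Finset.induction with
  | empty => simpa using contDiffAt_const
  | insert a s hni ih =>
    simp only [Finset.prod_insert hni]
    exact (hf a (Finset.mem_insert_self a s)).mul
      (ih fun i hi => hf i (Finset.mem_insert_of_mem hi))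

section unitvec
-- norm-1 of eigenvector basis coords
lemma sum_normSq_eigenvectorBasis {n : ℕ} {B : Matrix (Fin n) (Fin n) ℂ}
    (hB : B.IsHermitian) (i : Fin n) :
    ∑ j, Complex.normSq (hB.eigenvectorBasis i j) = 1 := by
  have h1 : ‖hB.eigenvectorBasis i‖ = 1 := hB.eigenvectorBasis.orthonormal.1 i
  have h2 := EuclideanSpace.norm_eq (hB.eigenvectorBasis i)
  rw [h1] at h2
  have h3 : ∑ j, ‖hB.eigenvectorBasis i j‖ ^ 2 = 1 := Real.sqrt_eq_one.mp h2.symm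
  rw [← h3]
  congr 1; funext j
  rw [Complex.normSq_eq_norm_sq]
end unitvec

lemma lam_smooth {d n : ℕ} (hn : 0 < n)
    (A : EuclideanSpace ℝ (Fin d) → Matrix (Fin n) (Fin n) ℂ)
    (hherm : ∀ ω, (A ω).IsHermitian)
    (hanal : ∀ i j, AnalyticOnNhd ℝ (fun ω => A ω i j) Set.univ)
    (Λ : EuclideanSpace ℝ (Fin d) → ℝ)
    (hΛ : ∀ ω, Λ ω = ⨅ i, (hherm ω).eigenvalues i)
    (ω0 : EuclideanSpace ℝ (Fin d))
    (hsimple : ∃! i, (hherm ω0).eigenvalues i = Λ ω0) :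
    ContDiffAt ℝ 2 Λ ω0 := by
  classical
  haveI : Nonempty (Fin n) := ⟨⟨0, hn⟩⟩
  obtain ⟨i₀, hi₀, huniq⟩ := hsimple
  set lam0 := Λ ω0 with hlam0
  -- all other eigenvalues are strictly bigger
  have hgt : ∀ i, i ≠ i₀ → lam0 < (hherm ω0).eigenvalues i := by
    intro i hi
    have h1 : lam0 ≤ (hherm ω0).eigenvalues i := by
      rw [hlam0, hΛ]
      exact ciInf_le (Set.Finite.bddBelow (Set.finite_range _)) i
    rcases lt_or_eq_of_le h1 with h | h
    · exact h
    · exact absurd (huniq i h.symm) hi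
  -- quadratic form of a unit eigenvector equals eigenvalue; Rayleigh bound
  -- continuity of Λ at ω0
  have key : ∀ ω ω' : EuclideanSpace ℝ (Fin d), Λ ω' ≤ Λ ω + ∑ i, ∑ j, ‖A ω' i j - A ω i j‖ := by
    intro ω ω'
    obtain ⟨im, him⟩ := exists_eq_ciInf_of_finite (f := (hherm ω).eigenvalues)
    set v : Fin n → ℂ := ⇑((hherm ω).eigenvectorBasis im) with hv
    have hv1 : ∑ i, Complex.normSq (v i) = 1 := sum_normSq_eigenvectorBasis (hherm ω) im
    have habs : ∀ i, ‖v i‖ ≤ 1 := by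
      intro i
      have h1 : Complex.normSq (v i) ≤ 1 := by
        rw [← hv1]
        exact Finset.single_le_sum (fun j _ => Complex.normSq_nonneg (v j))
          (Finset.mem_univ i)
      nlinarith [Complex.sq_norm (v i), norm_nonneg (v i)]
    have h2 : Λ ω' ≤ (star v ⬝ᵥ (A ω') *ᵥ v).re := by
      have := iInf_le_quadform (hherm ω') v
      rw [hv1, mul_one] at this
      rw [hΛ ω']; exact this
    have h3 : (star v ⬝ᵥ (A ω) *ᵥ v).re = Λ ω := by
      have h4 := (hherm ω).eigenvalues_eq im
      rw [hΛ ω, ← him, h4]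
      rfl
    have h5 : (star v ⬝ᵥ (A ω') *ᵥ v).re
        = (star v ⬝ᵥ (A ω) *ᵥ v).re + (star v ⬝ᵥ (A ω' - A ω) *ᵥ v).re := by
      rw [← Complex.add_re, ← dotProduct_add, ← Matrix.add_mulVec]
      norm_num
    have h6 := (abs_le.mp (abs_quadform_le (B := A ω' - A ω) v habs)).2
    have h7 : ∀ i j, (A ω' - A ω) i j = A ω' i j - A ω i j := fun i j => rfl
    calc Λ ω' ≤ (star v ⬝ᵥ (A ω') *ᵥ v).re := h2
      _ = (star v ⬝ᵥ (A ω) *ᵥ v).re + (star v ⬝ᵥ (A ω' - A ω) *ᵥ v).re := h5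
      _ ≤ Λ ω + ∑ i, ∑ j, ‖(A ω' - A ω) i j‖ := by
          rw [h3]; linarith
      _ = Λ ω + ∑ i, ∑ j, ‖A ω' i j - A ω i j‖ := by
          simp only [h7]
  have hΛcont : ContinuousAt Λ ω0 := by
    set g : EuclideanSpace ℝ (Fin d) → ℝ := fun ω => ∑ i, ∑ j, ‖A ω i j - A ω0 i j‖ with hg
    have hgt0 : Tendsto g (𝓝 ω0) (𝓝 0) := by
      have h0 : Tendsto g (𝓝 ω0) (𝓝 (∑ (i : Fin n), ∑ (j : Fin n), (0:ℝ))) := by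
        apply tendsto_finset_sum
        intro i _
        apply tendsto_finset_sum
        intro j _
        have hc : ContinuousAt (fun ω => A ω i j) ω0 :=
          ((hanal i j) ω0 trivial).continuousAt
        have : Tendsto (fun ω => A ω i j - A ω0 i j) (𝓝 ω0) (𝓝 0) := by
          have h := hc.sub (continuousAt_const (y := A ω0 i j))
          rw [ContinuousAt] at h
          simpa [Pi.sub_def] using h
        simpa [Function.comp_def] using (continuous_norm.tendsto (0:ℂ)).comp this
      simpa using h0
    have hbound : ∀ ω, ‖Λ ω - Λ ω0‖ ≤ g ω := by
      intro ω
      rw [Real.norm_eq_abs, abs_le]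
      constructor
      · have := key ω ω0
        have hsym : ∑ i, ∑ j, ‖A ω0 i j - A ω i j‖ = g ω := by
          rw [hg]
          refine Finset.sum_congr rfl fun i _ => Finset.sum_congr rfl fun j _ => ?_
          exact norm_sub_rev _ _
        have hk := key ω ω0
        rw [hsym] at hk
        linarith
      · have hk := key ω0 ω
        linarith
    have h1 : Tendsto (fun ω => Λ ω - Λ ω0) (𝓝 ω0) (𝓝 0) :=
      squeeze_zero_norm hbound hgt0
    have h2 : Tendsto Λ (𝓝 ω0) (𝓝 (0 + Λ ω0)) := by
      simpa using h1.add_const (Λ ω0)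
    rw [ContinuousAt]
    simpa using h2
  -- the determinant function
  set q : EuclideanSpace ℝ (Fin d) × ℝ → ℝ := fun z => (Matrix.det (A z.1 - (z.2 : ℂ) • 1)).re with hq
  set pt : EuclideanSpace ℝ (Fin d) × ℝ := (ω0, lam0) with hpt
  have hent : ∀ i j, ContDiffAt ℝ 2 (fun z : EuclideanSpace ℝ (Fin d) × ℝ => (A z.1 - (z.2 : ℂ) • 1) i j) pt := by
    intro i j
    have h1 : ContDiffAt ℝ 2 (fun z : EuclideanSpace ℝ (Fin d) × ℝ => A z.1 i j) pt :=
      ((hanal i j) ω0 trivial).contDiffAt.comp pt contDiffAt_fst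
    have h2 : ContDiffAt ℝ 2 (fun z : EuclideanSpace ℝ (Fin d) × ℝ => (z.2 : ℂ) * (1 : Matrix (Fin n) (Fin n) ℂ) i j) pt := by
      exact (Complex.ofRealCLM.contDiff.contDiffAt.comp pt contDiffAt_snd).mul contDiffAt_const
    have h3 : (fun z : EuclideanSpace ℝ (Fin d) × ℝ => (A z.1 - (z.2 : ℂ) • 1) i j)
        = fun z : EuclideanSpace ℝ (Fin d) × ℝ => A z.1 i j - (z.2 : ℂ) * (1 : Matrix (Fin n) (Fin n) ℂ) i j := by
      funext z
      simp [Matrix.sub_apply, Matrix.smul_apply, smul_eq_mul]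
    rw [h3]
    exact h1.sub h2
  have hqcd : ContDiffAt ℝ 2 q pt := by
    have hdet : ContDiffAt ℝ 2 (fun z : EuclideanSpace ℝ (Fin d) × ℝ => Matrix.det (A z.1 - (z.2 : ℂ) • 1)) pt := by
      have h1 : (fun z : EuclideanSpace ℝ (Fin d) × ℝ => Matrix.det (A z.1 - (z.2 : ℂ) • 1))
          = fun z : EuclideanSpace ℝ (Fin d) × ℝ => ∑ σ : Equiv.Perm (Fin n),
              ((Equiv.Perm.sign σ : ℤ) : ℂ) * ∏ i, (A z.1 - (z.2 : ℂ) • 1) (σ i) i := by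
        funext z; rw [Matrix.det_apply']
      rw [h1]
      apply ContDiffAt.sum
      intro σ _
      exact contDiffAt_const.mul (contDiffAt_finset_prod _ fun i _ => hent (σ i) i)
    exact Complex.reCLM.contDiff.contDiffAt.comp pt hdet
  -- the derivative of q
  set Dq : (EuclideanSpace ℝ (Fin d) × ℝ) →L[ℝ] ℝ := fderiv ℝ q pt with hDq
  have hqderiv : HasFDerivAt q Dq pt := (hqcd.differentiableAt two_ne_zero).hasFDerivAt
  set c0 : ℝ := Dq (0, 1) with hc0def
  -- q along the vertical line through ω0
  have hprod : ∀ x : ℝ, q (ω0, x) = (∏ i, (((hherm ω0).eigenvalues i : ℂ) - x)).re := by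
    intro x
    simp only [hq]
    exact congrArg Complex.re (det_sub_smul_eq_prod (hherm ω0) x)
  have hvert : HasDerivAt (fun x : ℝ => q (ω0, x)) c0 lam0 := by
    have hline : HasDerivAt (fun x : ℝ => ((ω0 : EuclideanSpace ℝ (Fin d)), x))
        (((0 : EuclideanSpace ℝ (Fin d)), (1:ℝ))) lam0 :=
      (hasDerivAt_const lam0 ω0).prodMk (hasDerivAt_id lam0)
    exact hqderiv.comp_hasDerivAt lam0 hline
  -- explicit derivative of the product
  have hCder : HasDerivAt (fun x : ℝ => (∏ i, (((hherm ω0).eigenvalues i : ℂ) - x)).re)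
      (-(∏ i ∈ Finset.univ.erase i₀, (((hherm ω0).eigenvalues i : ℂ) - lam0))).re lam0 := by
    have hfac : ∀ i : Fin n, HasDerivAt (fun x : ℝ => (((hherm ω0).eigenvalues i : ℂ) - x))
        (-1 : ℂ) lam0 := by
      intro i
      have h1 : HasDerivAt (fun x : ℝ => ((x : ℂ))) (1 : ℂ) lam0 := by
        simpa using (hasDerivAt_id lam0).ofReal_comp
      simpa using h1.const_sub (((hherm ω0).eigenvalues i : ℂ))
    have hCd : HasDerivAt (fun x : ℝ => ∏ i, (((hherm ω0).eigenvalues i : ℂ) - x))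
        (∑ i, (∏ j ∈ Finset.univ.erase i, (((hherm ω0).eigenvalues j : ℂ) - lam0)) • (-1 : ℂ))
        lam0 := HasDerivAt.fun_finsetProd (fun i _ => hfac i)
    have hsum : (∑ i, (∏ j ∈ Finset.univ.erase i, (((hherm ω0).eigenvalues j : ℂ) - lam0)) • (-1 : ℂ))
        = -(∏ i ∈ Finset.univ.erase i₀, (((hherm ω0).eigenvalues i : ℂ) - lam0)) := by
      rw [Finset.sum_eq_single i₀]
      · simp
      · intro j _ hj
        have hzero : (((hherm ω0).eigenvalues i₀ : ℂ) - lam0) = 0 := by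
          rw [hi₀]; ring
        rw [Finset.prod_eq_zero (Finset.mem_erase.mpr ⟨Ne.symm hj, Finset.mem_univ i₀⟩) hzero]
        simp
      · intro h
        exact absurd (Finset.mem_univ i₀) h
    rw [hsum] at hCd
    exact (Complex.reCLM.hasFDerivAt.comp_hasDerivAt lam0 hCd)
  have hc0 : c0 < 0 := by
    have heq : c0 = (-(∏ i ∈ Finset.univ.erase i₀, (((hherm ω0).eigenvalues i : ℂ) - lam0))).re := by
      have h1 := hvert.deriv
      have h2 : (fun x : ℝ => q (ω0, x)) = fun x : ℝ =>
          (∏ i, (((hherm ω0).eigenvalues i : ℂ) - x)).re := funext hprod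
      rw [h2] at h1
      rw [← h1, hCder.deriv]
    have hreal : (∏ i ∈ Finset.univ.erase i₀, (((hherm ω0).eigenvalues i : ℂ) - lam0))
        = ((∏ i ∈ Finset.univ.erase i₀, ((hherm ω0).eigenvalues i - lam0) : ℝ) : ℂ) := by
      push_cast
      rfl
    have hpos : 0 < ∏ i ∈ Finset.univ.erase i₀, ((hherm ω0).eigenvalues i - lam0) := by
      refine Finset.prod_pos fun i hi => ?_
      have := hgt i (Finset.mem_erase.mp hi).1
      linarith
    rw [heq, hreal]
    rw [← Complex.ofReal_neg, Complex.ofReal_re]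
    linarith
  have hc0ne : c0 ≠ 0 := ne_of_lt hc0
  -- build the continuous linear equivalence
  set Fw : (EuclideanSpace ℝ (Fin d) × ℝ) →L[ℝ] (EuclideanSpace ℝ (Fin d) × ℝ) := (ContinuousLinearMap.fst ℝ (EuclideanSpace ℝ (Fin d)) ℝ).prod Dq
    with hFw
  set L : (EuclideanSpace ℝ (Fin d) × ℝ) →L[ℝ] ℝ := c0⁻¹ • (ContinuousLinearMap.snd ℝ (EuclideanSpace ℝ (Fin d)) ℝ
    - Dq.comp ((ContinuousLinearMap.inl ℝ (EuclideanSpace ℝ (Fin d)) ℝ).comp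
        (ContinuousLinearMap.fst ℝ (EuclideanSpace ℝ (Fin d)) ℝ))) with hL
  set G : (EuclideanSpace ℝ (Fin d) × ℝ) →L[ℝ] (EuclideanSpace ℝ (Fin d) × ℝ) := (ContinuousLinearMap.fst ℝ (EuclideanSpace ℝ (Fin d)) ℝ).prod L
    with hG
  have hDqsplit : ∀ (u : EuclideanSpace ℝ (Fin d)) (t : ℝ), Dq (u, t) = Dq (u, 0) + t * c0 := by
    intro u t
    have h1 : ((u, t) : (EuclideanSpace ℝ (Fin d) × ℝ)) = (u, 0) + t • ((0 : EuclideanSpace ℝ (Fin d)), (1:ℝ)) := by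
      simp [Prod.ext_iff]
    rw [h1, Dq.map_add, Dq.map_smul, hc0def]
    simp [smul_eq_mul]
  have hGF : Function.LeftInverse G Fw := by
    intro z
    obtain ⟨u, t⟩ := z
    have h1 : Fw (u, t) = (u, Dq (u, t)) := rfl
    have h2 : G (u, Dq (u, t)) = (u, c0⁻¹ * (Dq (u, t) - Dq (u, 0))) := rfl
    rw [h1, h2, hDqsplit]
    have : c0⁻¹ * (Dq (u, 0) + t * c0 - Dq (u, 0)) = t := by
      field_simp
      ring
    rw [this]
  have hFG : Function.RightInverse G Fw := by
    intro z
    obtain ⟨u, s⟩ := z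
    have h1 : G (u, s) = (u, c0⁻¹ * (s - Dq (u, 0))) := rfl
    have h2 : Fw (u, c0⁻¹ * (s - Dq (u, 0))) = (u, Dq (u, c0⁻¹ * (s - Dq (u, 0)))) := rfl
    rw [h1, h2, hDqsplit]
    have : Dq (u, 0) + c0⁻¹ * (s - Dq (u, 0)) * c0 = s := by
      field_simp
      ring
    rw [this]
  set e : (EuclideanSpace ℝ (Fin d) × ℝ) ≃L[ℝ] (EuclideanSpace ℝ (Fin d) × ℝ) := ContinuousLinearEquiv.equivOfInverse Fw G hGF hFG with he
  -- the map Φ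
  set Φ : (EuclideanSpace ℝ (Fin d) × ℝ) → (EuclideanSpace ℝ (Fin d) × ℝ) := fun z => (z.1, q z) with hΦ
  have hΦcd : ContDiffAt ℝ 2 Φ pt := contDiffAt_fst.prodMk hqcd
  have hΦ' : HasFDerivAt Φ (e : (EuclideanSpace ℝ (Fin d) × ℝ) →L[ℝ] (EuclideanSpace ℝ (Fin d) × ℝ)) pt := by
    have h1 : HasFDerivAt Φ Fw pt :=
      ((ContinuousLinearMap.fst ℝ (EuclideanSpace ℝ (Fin d)) ℝ).hasFDerivAt).prodMk hqderiv
    exact h1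
  have hS : HasStrictFDerivAt Φ (e : (EuclideanSpace ℝ (Fin d) × ℝ) →L[ℝ] (EuclideanSpace ℝ (Fin d) × ℝ)) pt := hΦcd.hasStrictFDerivAt' hΦ' two_ne_zero
  set Ψ : (EuclideanSpace ℝ (Fin d) × ℝ) → (EuclideanSpace ℝ (Fin d) × ℝ) := HasStrictFDerivAt.localInverse Φ e pt hS with hΨ
  have hleft : ∀ᶠ z in 𝓝 pt, Ψ (Φ z) = z := hS.eventually_left_inverse
  have hq0 : ∀ ω, q (ω, Λ ω) = 0 := by
    intro ω
    obtain ⟨im, him⟩ := exists_eq_ciInf_of_finite (f := (hherm ω).eigenvalues)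
    have h1 : q (ω, Λ ω) = (∏ i, (((hherm ω).eigenvalues i : ℂ) - (Λ ω : ℝ))).re := by
      simp only [hq]
      exact congrArg Complex.re (det_sub_smul_eq_prod (hherm ω) (Λ ω))
    rw [h1, Finset.prod_eq_zero (Finset.mem_univ im)]
    · simp
    · rw [him, ← hΛ ω]
      ring
  have hΦpt : Φ pt = (ω0, 0) := by
    have hq0' : q pt = 0 := hq0 ω0
    show ((pt.1, q pt) : EuclideanSpace ℝ (Fin d) × ℝ) = (ω0, 0)
    rw [hq0', hpt]
  have hΨcd : ContDiffAt ℝ 2 Ψ (ω0, 0) := by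
    have h1 : ContDiffAt ℝ 2 (hΦcd.localInverse hΦ' two_ne_zero) (Φ pt) :=
      hΦcd.to_localInverse hΦ' two_ne_zero
    rw [hΦpt] at h1
    exact h1
  -- eventual equality
  have hev : ∀ᶠ ω in 𝓝 ω0, Ψ (ω, 0) = (ω, Λ ω) := by
    have hpair : ContinuousAt (fun ω : EuclideanSpace ℝ (Fin d) => ((ω, Λ ω) : (EuclideanSpace ℝ (Fin d) × ℝ))) ω0 :=
      continuousAt_id.prodMk hΛcont
    have hpt' : ((ω0, Λ ω0) : EuclideanSpace ℝ (Fin d) × ℝ) = pt := by rw [hpt, hlam0]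
    have h2 : Tendsto (fun ω : EuclideanSpace ℝ (Fin d) => ((ω, Λ ω) : (EuclideanSpace ℝ (Fin d) × ℝ))) (𝓝 ω0) (𝓝 pt) := by
      rw [← hpt']
      exact hpair
    refine (h2.eventually hleft).mono fun ω hω => ?_
    have h3 : Φ (ω, Λ ω) = ((ω, 0) : EuclideanSpace ℝ (Fin d) × ℝ) := by
      show ((ω, q (ω, Λ ω)) : EuclideanSpace ℝ (Fin d) × ℝ) = (ω, 0)
      rw [hq0 ω]
    rw [← h3, hω]
  have hfinal : Λ =ᶠ[𝓝 ω0] fun ω => (Ψ (ω, 0)).2 := by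
    refine hev.mono fun ω hω => ?_
    show Λ ω = (Ψ (ω, 0)).2
    rw [hω]
  have hgood : ContDiffAt ℝ 2 (fun ω : EuclideanSpace ℝ (Fin d) => (Ψ (ω, 0)).2) ω0 := by
    have h1 : ContDiffAt ℝ 2 (fun ω : EuclideanSpace ℝ (Fin d) => ((ω, 0) : (EuclideanSpace ℝ (Fin d) × ℝ))) ω0 :=
      contDiffAt_id.prodMk contDiffAt_const
    exact contDiffAt_snd.comp ω0 (hΨcd.comp ω0 h1)
  exact hgood.congr_of_eventuallyEq hfinal


open scoped RealInnerProductSpace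

lemma deriv2_const_mul (c : ℂ) {f : ℝ → ℂ} (hf : ContDiffAt ℝ 2 f 0) :
    deriv (deriv (fun t => c * f t)) 0 = c * deriv (deriv f) 0 := by
  have h := deriv2_clm (c • ContinuousLinearMap.id ℝ ℂ) hf
  simpa [smul_eq_mul] using h

/-- **Analytic upper bound on the second derivatives of the smallest eigenvalue.** For an
analytic Hermitian matrix family `𝒜 : ℝ^d → ℂ^{n×n}` with `Λ(ω) = λ_min(𝒜(ω))`, at any
point `ω₀` where the smallest eigenvalue is simple, the Hessian of `Λ` is bounded above by
the largest eigenvalue of the `(nd)×(nd)` block Hessian `∇²𝒜(ω₀)`: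
`D²Λ(ω₀)[p,p] ≤ λ_max(∇²𝒜(ω₀))·‖p‖²` for every `p`. -/
theorem stmt_17 {d n : ℕ} (hn : 0 < n)
    (A : EuclideanSpace ℝ (Fin d) → Matrix (Fin n) (Fin n) ℂ)
    (hherm : ∀ ω, (A ω).IsHermitian)
    (hanal : ∀ i j, AnalyticOnNhd ℝ (fun ω => A ω i j) Set.univ)
    (Λ : EuclideanSpace ℝ (Fin d) → ℝ)
    (hΛ : ∀ ω, Λ ω = ⨅ i, (hherm ω).eigenvalues i)
    (ω0 : EuclideanSpace ℝ (Fin d))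
    (hsimple : ∃! i, (hherm ω0).eigenvalues i = Λ ω0)
    (hdiff : DifferentiableAt ℝ (fderiv ℝ Λ) ω0)
    (M : Matrix (Fin d × Fin n) (Fin d × Fin n) ℂ)
    (hM : ∀ (k l : Fin d) (i j : Fin n), M (k, i) (l, j) =
      iteratedFDeriv ℝ 2 (fun ω => A ω i j) ω0
        ![EuclideanSpace.single k (1 : ℝ), EuclideanSpace.single l (1 : ℝ)])
    (hMherm : M.IsHermitian) :
    ∀ p : EuclideanSpace ℝ (Fin d),
      fderiv ℝ (fderiv ℝ Λ) ω0 p p ≤ (⨆ a, hMherm.eigenvalues a) * ‖p‖ ^ 2 := by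
  classical
  intro p
  haveI : Nonempty (Fin n) := ⟨⟨0, hn⟩⟩
  rcases Nat.eq_zero_or_pos d with hd | hd
  · -- degenerate case d = 0
    subst hd
    have hp : p = 0 := Subsingleton.elim p 0
    rw [hp]
    simp
  haveI : Nonempty (Fin d) := ⟨⟨0, hd⟩⟩
  have hΛ2 : ContDiffAt ℝ 2 Λ ω0 := lam_smooth hn A hherm hanal Λ hΛ ω0 hsimple
  obtain ⟨i₀, hi₀, _⟩ := hsimple
  set v : Fin n → ℂ := ⇑((hherm ω0).eigenvectorBasis i₀) with hv
  have hv1 : ∑ i, Complex.normSq (v i) = 1 := sum_normSq_eigenvectorBasis (hherm ω0) i₀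
  set φ : EuclideanSpace ℝ (Fin d) → ℝ := fun ω => (star v ⬝ᵥ (A ω) *ᵥ v).re with hφ
  have hlow : ∀ ω, Λ ω ≤ φ ω := by
    intro ω
    have h1 := iInf_le_quadform (hherm ω) v
    rw [hv1, mul_one] at h1
    rw [hΛ ω]
    exact h1
  have heq0 : φ ω0 = Λ ω0 := by
    have h4 := (hherm ω0).eigenvalues_eq i₀
    rw [← hi₀, h4]
    rfl
  set u : ℝ → EuclideanSpace ℝ (Fin d) := fun t => ω0 + t • p with hu
  have hu0 : u 0 = ω0 := by simp [hu]
  have hucd : ContDiff ℝ 2 u := contDiff_const.add (contDiff_id.smul contDiff_const)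
  have hAcd : ∀ (i j : Fin n) (ω : EuclideanSpace ℝ (Fin d)),
      ContDiffAt ℝ 2 (fun ω => A ω i j) ω := fun i j ω => ((hanal i j) ω trivial).contDiffAt
  have hΛline : ContDiffAt ℝ 2 (fun t => Λ (u t)) 0 := by
    have h1 : ContDiffAt ℝ 2 Λ (u 0) := by rw [hu0]; exact hΛ2
    exact h1.comp 0 hucd.contDiffAt
  -- the quadratic-form function along the line, as an explicit sum
  set Fc : ℝ → ℂ := fun t => ∑ i, ∑ j, (starRingEnd ℂ) (v i) * v j * A (u t) i j with hFc
  have hFeq : ∀ t, φ (u t) = (Fc t).re := by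
    intro t
    have heq : star v ⬝ᵥ A (u t) *ᵥ v = Fc t := by
      simp only [hFc, dotProduct, Matrix.mulVec, Pi.star_apply, Finset.mul_sum]
      refine Finset.sum_congr rfl fun i _ => Finset.sum_congr rfl fun j _ => ?_
      simp only [Complex.star_def]
      ring
    simp only [hφ]
    rw [heq]
  have hentline : ∀ (i j : Fin n), ContDiffAt ℝ 2 (fun t => A (u t) i j) 0 := by
    intro i j
    have h1 : ContDiffAt ℝ 2 (fun ω => A ω i j) (u 0) := hAcd i j (u 0)
    exact h1.comp 0 hucd.contDiffAt
  have hFccd : ContDiffAt ℝ 2 Fc 0 := by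
    rw [hFc]
    exact ContDiffAt.sum fun i _ => ContDiffAt.sum fun j _ =>
      contDiffAt_const.mul (hentline i j)
  have hφline : ContDiffAt ℝ 2 (fun t => φ (u t)) 0 := by
    have h1 : ContDiffAt ℝ 2 (fun t => (Fc t).re) 0 :=
      Complex.reCLM.contDiff.contDiffAt.comp 0 hFccd
    exact h1.congr_of_eventuallyEq (Filter.Eventually.of_forall hFeq)
  set h : ℝ → ℝ := fun t => Λ (u t) - φ (u t) with hh
  have hhcd : ContDiffAt ℝ 2 h 0 := hΛline.sub hφline
  have hmax : ∀ t, h t ≤ h 0 := by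
    intro t
    rw [hh]
    simp only
    rw [hu0]
    have h1 := hlow (u t)
    have h2 : Λ ω0 - φ ω0 = 0 := by rw [heq0]; ring
    linarith
  have htest : deriv (deriv h) 0 ≤ 0 := second_deriv_test hhcd hmax
  have hsplit : deriv (deriv h) 0
      = deriv (deriv (fun t => Λ (u t))) 0 - deriv (deriv (fun t => φ (u t))) 0 :=
    deriv2_sub hΛline hφline
  have hΛdd : deriv (deriv (fun t => Λ (u t))) 0 = fderiv ℝ (fderiv ℝ Λ) ω0 p p :=
    second_deriv_line p hΛ2
  -- second derivative of entries along the line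
  have hAdd : ∀ (i j : Fin n), deriv (deriv (fun t => A (u t) i j)) 0
      = fderiv ℝ (fderiv ℝ (fun ω => A ω i j)) ω0 p p := fun i j =>
    second_deriv_line p (hAcd i j ω0)
  -- expansion of p in the standard basis
  have hpsum : p = ∑ k, p k • EuclideanSpace.single k (1 : ℝ) := by
    have h1 := (EuclideanSpace.basisFun (Fin d) ℝ).sum_repr p
    simp only [EuclideanSpace.basisFun_repr, EuclideanSpace.basisFun_apply] at h1
    exact h1.symm
  have hbil : ∀ (B : EuclideanSpace ℝ (Fin d) →L[ℝ] (EuclideanSpace ℝ (Fin d) →L[ℝ] ℂ)),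
      B p p = ∑ k, ∑ l, (p k * p l) •
        B (EuclideanSpace.single k (1 : ℝ)) (EuclideanSpace.single l (1 : ℝ)) := by
    intro B
    have e1 : ∀ w : EuclideanSpace ℝ (Fin d), B p w
        = ∑ k, p k • B (EuclideanSpace.single k (1:ℝ)) w := by
      intro w
      calc B p w = B (∑ k, p k • EuclideanSpace.single k (1:ℝ)) w := by rw [← hpsum]
        _ = ∑ k, p k • B (EuclideanSpace.single k (1:ℝ)) w := by
            rw [map_sum, ContinuousLinearMap.sum_apply]
            exact Finset.sum_congr rfl fun k _ => by
              rw [_root_.map_smul, ContinuousLinearMap.smul_apply]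
    have e2 : ∀ k : Fin d, B (EuclideanSpace.single k (1:ℝ)) p
        = ∑ l, p l • B (EuclideanSpace.single k (1:ℝ)) (EuclideanSpace.single l (1:ℝ)) := by
      intro k
      calc B (EuclideanSpace.single k (1:ℝ)) p
          = B (EuclideanSpace.single k (1:ℝ)) (∑ l, p l • EuclideanSpace.single l (1:ℝ)) := by
            rw [← hpsum]
        _ = ∑ l, p l • B (EuclideanSpace.single k (1:ℝ)) (EuclideanSpace.single l (1:ℝ)) := by
            rw [map_sum]
            exact Finset.sum_congr rfl fun l _ => by rw [_root_.map_smul]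
    rw [e1 p]
    refine Finset.sum_congr rfl fun k _ => ?_
    rw [e2 k, Finset.smul_sum]
    exact Finset.sum_congr rfl fun l _ => by rw [smul_smul]
  -- relation with the matrix M
  have hMrel : ∀ (k l : Fin d) (i j : Fin n), M (k, i) (l, j)
      = fderiv ℝ (fderiv ℝ (fun ω => A ω i j)) ω0 (EuclideanSpace.single k (1 : ℝ))
          (EuclideanSpace.single l (1 : ℝ)) := by
    intro k l i j
    rw [hM k l i j, iteratedFDeriv_two_apply]
    simp
  -- second derivative of the quadratic form
  set x : Fin d × Fin n → ℂ := fun a => ((p a.1 : ℂ) * v a.2) with hx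
  have hFdd : deriv (deriv Fc) 0 = ∑ i, ∑ j, (starRingEnd ℂ) (v i) * v j *
      (∑ k, ∑ l, ((p k * p l : ℝ) : ℂ) * M (k, i) (l, j)) := by
    rw [hFc]
    rw [deriv2_sum _ fun i _ => ContDiffAt.sum fun j _ => contDiffAt_const.mul (hentline i j)]
    refine Finset.sum_congr rfl fun i _ => ?_
    rw [deriv2_sum _ fun j _ => contDiffAt_const.mul (hentline i j)]
    refine Finset.sum_congr rfl fun j _ => ?_
    rw [deriv2_const_mul _ (hentline i j), hAdd i j, hbil]
    congr 1
    refine Finset.sum_congr rfl fun k _ => Finset.sum_congr rfl fun l _ => ?_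
    rw [← hMrel k l i j]
    rw [Complex.real_smul]
  -- identify with the quadratic form of M
  have step1 : ∀ (f : Fin n → Fin n → Fin d → Fin d → ℂ),
      ∑ i, ∑ j, ∑ k, ∑ l, f i j k l = ∑ k, ∑ i, ∑ l, ∑ j, f i j k l := by
    intro f
    calc ∑ i, ∑ j, ∑ k, ∑ l, f i j k l
        = ∑ i, ∑ k, ∑ j, ∑ l, f i j k l :=
          Finset.sum_congr rfl fun i _ => Finset.sum_comm
      _ = ∑ k, ∑ i, ∑ j, ∑ l, f i j k l := Finset.sum_comm
      _ = ∑ k, ∑ i, ∑ l, ∑ j, f i j k l :=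
          Finset.sum_congr rfl fun k _ => Finset.sum_congr rfl fun i _ => Finset.sum_comm
  have hquad : deriv (deriv Fc) 0 = star x ⬝ᵥ M *ᵥ x := by
    rw [hFdd]
    simp only [dotProduct, Matrix.mulVec, Pi.star_apply, Fintype.sum_prod_type,
      Finset.mul_sum]
    rw [step1 fun i j k l => (starRingEnd ℂ) (v i) * v j * (((p k * p l : ℝ) : ℂ) * M (k, i) (l, j))]
    refine Finset.sum_congr rfl fun k _ => Finset.sum_congr rfl fun i _ =>
      Finset.sum_congr rfl fun l _ => Finset.sum_congr rfl fun j _ => ?_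
    simp only [hx, Complex.star_def, _root_.map_mul, Complex.conj_ofReal, Complex.ofReal_mul]
    ring
  have hφdd : deriv (deriv (fun t => φ (u t))) 0 = (star x ⬝ᵥ M *ᵥ x).re := by
    have h1 : (fun t => φ (u t)) = fun t => (Fc t).re := funext hFeq
    have h2 := deriv2_clm Complex.reCLM hFccd
    simp only [Complex.reCLM_apply] at h2
    rw [h1, h2, hquad]
  have hxnorm : ∑ a : Fin d × Fin n, Complex.normSq (x a) = ‖p‖ ^ 2 := by
    simp only [hx]
    rw [Fintype.sum_prod_type]
    have h1 : ∀ k : Fin d, ∑ i, Complex.normSq ((p k : ℂ) * v i) = p k ^ 2 := by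
      intro k
      calc ∑ i, Complex.normSq ((p k : ℂ) * v i)
          = ∑ i, p k ^ 2 * Complex.normSq (v i) :=
            Finset.sum_congr rfl fun i _ => by
              rw [Complex.normSq_mul, Complex.normSq_ofReal, sq]
        _ = p k ^ 2 * 1 := by rw [← Finset.mul_sum, hv1]
        _ = p k ^ 2 := mul_one _
    rw [Finset.sum_congr rfl fun k _ => h1 k]
    rw [EuclideanSpace.norm_eq, Real.sq_sqrt (by positivity)]
    exact Finset.sum_congr rfl fun k _ => by rw [Real.norm_eq_abs, sq_abs]
  have hray : (star x ⬝ᵥ M *ᵥ x).re ≤ (⨆ a, hMherm.eigenvalues a) * ‖p‖ ^ 2 := by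
    have h1 := quadform_le_iSup hMherm x
    rwa [hxnorm] at h1
  have hfin : fderiv ℝ (fderiv ℝ Λ) ω0 p p ≤ deriv (deriv (fun t => φ (u t))) 0 := by
    rw [← hΛdd]
    rw [hsplit] at htest
    linarith
  exact le_trans hfin (hφdd ▸ hray)
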